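/- For each lattice point n ∈ ℤ³ at which D₁(n), D₂(n), D₃(n) are nonzero, the six equations of motion at n hold if and only if the three trilinear equations at n hold for all three cyclic permutations (α,β,γ) ∈ {(1,2,3), (2,3,1), (3,1,2)}. In other words, the Legendre substitution transforms the discrete equations of motion into the trilinear (generalized Hirota) system. -/

import Mathlib

set_option maxHeartbeats 1600000 in
/-- Under the Legendre substitution expressing the dynamical
variables `u_α, w_α` through the triplet of tau functions `τ₁, τ₂, τ₃` and the
pre-exponents, at every lattice point `n = (n₁,n₂,n₃)` where `D₁, D₂, D₃` are
nonzero, the six discrete equations of motion hold if and only if the three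
trilinear (generalized Hirota) equations hold for the three cyclic
permutations of `(1,2,3)`. -/
theorem statement2
    (τ₁ τ₂ τ₃ : ℤ → ℤ → ℤ → ℂ)
    (u₁0 w₁0 κ₁ u₂0 w₂0 κ₂ u₃0 w₃0 κ₃ : ℤ → ℤ → ℂ)
    (hτ : ∀ n₁ n₂ n₃ : ℤ,
      τ₁ n₁ n₂ n₃ ≠ 0 ∧ τ₂ n₁ n₂ n₃ ≠ 0 ∧ τ₃ n₁ n₂ n₃ ≠ 0)
    (hcoef : ∀ a b : ℤ,
      u₁0 a b ≠ 0 ∧ w₁0 a b ≠ 0 ∧ κ₁ a b ≠ 0 ∧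
      u₂0 a b ≠ 0 ∧ w₂0 a b ≠ 0 ∧ κ₂ a b ≠ 0 ∧
      u₃0 a b ≠ 0 ∧ w₃0 a b ≠ 0 ∧ κ₃ a b ≠ 0)
    -- the Legendre substitution
    (u₁ w₁ u₂ w₂ u₃ w₃ : ℤ → ℤ → ℤ → ℂ)
    (hu₁ : ∀ n₁ n₂ n₃ : ℤ,
      u₁ n₁ n₂ n₃ = u₁0 n₂ n₃ * τ₂ n₁ n₂ n₃ / τ₂ n₁ n₂ (n₃+1))
    (hw₁ : ∀ n₁ n₂ n₃ : ℤ,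
      w₁ n₁ n₂ n₃ = w₁0 n₂ n₃ * τ₃ n₁ (n₂+1) n₃ / τ₃ n₁ n₂ n₃)
    (hu₂ : ∀ n₁ n₂ n₃ : ℤ,
      u₂ n₁ n₂ n₃ = u₂0 n₁ n₃ * τ₁ n₁ n₂ n₃ / τ₁ n₁ n₂ (n₃+1))
    (hw₂ : ∀ n₁ n₂ n₃ : ℤ,
      w₂ n₁ n₂ n₃ = w₂0 n₁ n₃ * τ₃ n₁ n₂ n₃ / τ₃ (n₁+1) n₂ n₃)
    (hu₃ : ∀ n₁ n₂ n₃ : ℤ,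
      u₃ n₁ n₂ n₃ = u₃0 n₁ n₂ * τ₁ n₁ (n₂+1) n₃ / τ₁ n₁ n₂ n₃)
    (hw₃ : ∀ n₁ n₂ n₃ : ℤ,
      w₃ n₁ n₂ n₃ = w₃0 n₁ n₂ * τ₂ n₁ n₂ n₃ / τ₂ (n₁+1) n₂ n₃)
    -- the denominators
    (D₁ D₂ D₃ : ℤ → ℤ → ℤ → ℂ)
    (hD₁ : ∀ n₁ n₂ n₃ : ℤ, D₁ n₁ n₂ n₃ =
      κ₁ n₂ n₃ * u₁ n₁ n₂ n₃ * w₂ n₁ n₂ n₃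
      + κ₃ n₁ n₂ * u₂ n₁ n₂ n₃ * w₃ n₁ n₂ n₃
      + κ₁ n₂ n₃ * κ₃ n₁ n₂ * u₁ n₁ n₂ n₃ * w₃ n₁ n₂ n₃)
    (hD₂ : ∀ n₁ n₂ n₃ : ℤ, D₂ n₁ n₂ n₃ =
      u₂ n₁ n₂ n₃ * u₃ n₁ n₂ n₃ + u₂ n₁ n₂ n₃ * w₁ n₁ n₂ n₃
      + κ₁ n₂ n₃ * u₁ n₁ n₂ n₃ * w₁ n₁ n₂ n₃)
    (hD₃ : ∀ n₁ n₂ n₃ : ℤ, D₃ n₁ n₂ n₃ =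
      w₁ n₁ n₂ n₃ * w₂ n₁ n₂ n₃ + u₃ n₁ n₂ n₃ * w₂ n₁ n₂ n₃
      + κ₃ n₁ n₂ * u₃ n₁ n₂ n₃ * w₃ n₁ n₂ n₃)
    -- the trilinear coefficients
    (s₁ s₂ s₃ r₁ r₂ r₃ : ℤ → ℤ → ℤ → ℂ)
    (hs₁ : ∀ n₁ n₂ n₃ : ℤ, s₁ n₁ n₂ n₃ = κ₃ n₁ n₂ * w₃0 n₁ n₂ / w₂0 n₁ n₃)
    (hs₂ : ∀ n₁ n₂ n₃ : ℤ, s₂ n₁ n₂ n₃ = u₃0 n₁ n₂ / w₁0 n₂ n₃)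
    (hs₃ : ∀ n₁ n₂ n₃ : ℤ, s₃ n₁ n₂ n₃ = u₂0 n₁ n₃ / (κ₁ n₂ n₃ * u₁0 n₂ n₃))
    (hr₁ : ∀ n₁ n₂ n₃ : ℤ, r₁ n₁ n₂ n₃ =
      u₁0 n₂ n₃ * u₃0 n₁ n₂ / (w₁0 n₂ n₃ * u₂0 n₁ n₃))
    (hr₂ : ∀ n₁ n₂ n₃ : ℤ, r₂ n₁ n₂ n₃ =
      κ₂ n₁ n₃ * u₂0 n₁ n₃ * w₂0 n₁ n₃
        / (κ₁ n₂ n₃ * κ₃ n₁ n₂ * u₁0 n₂ n₃ * w₃0 n₁ n₂))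
    (hr₃ : ∀ n₁ n₂ n₃ : ℤ, r₃ n₁ n₂ n₃ =
      w₁0 n₂ n₃ * w₃0 n₁ n₂ / (w₂0 n₁ n₃ * u₃0 n₁ n₂))
    -- at a lattice point with nonvanishing denominators
    (n₁ n₂ n₃ : ℤ)
    (hD₁ne : D₁ n₁ n₂ n₃ ≠ 0) (hD₂ne : D₂ n₁ n₂ n₃ ≠ 0) (hD₃ne : D₃ n₁ n₂ n₃ ≠ 0) :
    -- the six equations of motion at n  ↔  the three trilinear equations at n
    ((u₁ (n₁+1) n₂ n₃ =
        κ₂ n₁ n₃ * u₁ n₁ n₂ n₃ * u₂ n₁ n₂ n₃ * w₂ n₁ n₂ n₃ / D₁ n₁ n₂ n₃) ∧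
     (w₁ (n₁+1) n₂ n₃ = D₃ n₁ n₂ n₃ / w₃ n₁ n₂ n₃) ∧
     (u₂ n₁ (n₂+1) n₃ =
        u₁ n₁ n₂ n₃ * u₂ n₁ n₂ n₃ * u₃ n₁ n₂ n₃ / D₂ n₁ n₂ n₃) ∧
     (w₂ n₁ (n₂+1) n₃ =
        w₁ n₁ n₂ n₃ * w₂ n₁ n₂ n₃ * w₃ n₁ n₂ n₃ / D₃ n₁ n₂ n₃) ∧
     (u₃ n₁ n₂ (n₃+1) = D₂ n₁ n₂ n₃ / u₁ n₁ n₂ n₃) ∧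
     (w₃ n₁ n₂ (n₃+1) =
        κ₂ n₁ n₃ * u₂ n₁ n₂ n₃ * w₂ n₁ n₂ n₃ * w₃ n₁ n₂ n₃ / D₁ n₁ n₂ n₃))
    ↔
    -- trilinear equation for (α,β,γ) = (1,2,3)
    ((r₁ n₁ n₂ n₃ * τ₁ n₁ (n₂+1) (n₃+1) * τ₂ n₁ n₂ n₃ * τ₃ n₁ n₂ n₃
        = τ₁ n₁ n₂ n₃ * τ₂ n₁ n₂ (n₃+1) * τ₃ n₁ (n₂+1) n₃
          + s₂ n₁ n₂ n₃ * τ₁ n₁ (n₂+1) n₃ * τ₂ n₁ n₂ (n₃+1) * τ₃ n₁ n₂ n₃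
          + (s₃ n₁ n₂ n₃)⁻¹ * τ₁ n₁ n₂ (n₃+1) * τ₂ n₁ n₂ n₃ * τ₃ n₁ (n₂+1) n₃) ∧
     -- trilinear equation for (α,β,γ) = (2,3,1)
     (r₂ n₁ n₂ n₃ * τ₂ (n₁+1) n₂ (n₃+1) * τ₃ n₁ n₂ n₃ * τ₁ n₁ n₂ n₃
        = τ₂ n₁ n₂ n₃ * τ₃ (n₁+1) n₂ n₃ * τ₁ n₁ n₂ (n₃+1)
          + s₃ n₁ n₂ n₃ * τ₂ n₁ n₂ (n₃+1) * τ₃ (n₁+1) n₂ n₃ * τ₁ n₁ n₂ n₃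
          + (s₁ n₁ n₂ n₃)⁻¹ * τ₂ (n₁+1) n₂ n₃ * τ₃ n₁ n₂ n₃ * τ₁ n₁ n₂ (n₃+1)) ∧
     -- trilinear equation for (α,β,γ) = (3,1,2)
     (r₃ n₁ n₂ n₃ * τ₃ (n₁+1) (n₂+1) n₃ * τ₁ n₁ n₂ n₃ * τ₂ n₁ n₂ n₃
        = τ₃ n₁ n₂ n₃ * τ₁ n₁ (n₂+1) n₃ * τ₂ (n₁+1) n₂ n₃
          + s₁ n₁ n₂ n₃ * τ₃ (n₁+1) n₂ n₃ * τ₁ n₁ (n₂+1) n₃ * τ₂ n₁ n₂ n₃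
          + (s₂ n₁ n₂ n₃)⁻¹ * τ₃ n₁ (n₂+1) n₃ * τ₁ n₁ n₂ n₃ * τ₂ (n₁+1) n₂ n₃)) := by
  obtain ⟨ha, hb, hk1, -, -, -, -, -, -⟩ := hcoef n₂ n₃
  obtain ⟨-, -, -, hc, hd, hk2, -, -, -⟩ := hcoef n₁ n₃
  obtain ⟨-, -, -, -, -, -, he, hf, hk3⟩ := hcoef n₁ n₂
  obtain ⟨hA0, hB0, hC0⟩ := hτ n₁ n₂ n₃
  obtain ⟨hA2, -, hC2⟩ := hτ n₁ (n₂+1) n₃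
  obtain ⟨hA3, hB3, -⟩ := hτ n₁ n₂ (n₃+1)
  obtain ⟨hA23, -, -⟩ := hτ n₁ (n₂+1) (n₃+1)
  obtain ⟨-, hB1, hC1⟩ := hτ (n₁+1) n₂ n₃
  obtain ⟨-, hB13, -⟩ := hτ (n₁+1) n₂ (n₃+1)
  obtain ⟨-, -, hC12⟩ := hτ (n₁+1) (n₂+1) n₃
  have hu₁ne : u₁ n₁ n₂ n₃ ≠ 0 := by
    rw [hu₁]; exact div_ne_zero (mul_ne_zero ha hB0) hB3
  have hw₃ne : w₃ n₁ n₂ n₃ ≠ 0 := by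
    rw [hw₃]; exact div_ne_zero (mul_ne_zero hf hB0) hB1
  constructor
  · rintro ⟨h1, h2, h3, h4, h5, h6⟩
    rw [eq_div_iff hD₁ne] at h1
    rw [eq_div_iff hw₃ne] at h2
    rw [eq_div_iff hD₂ne] at h3
    rw [eq_div_iff hD₃ne] at h4
    rw [eq_div_iff hu₁ne] at h5
    clear h6
    simp only [hu₁, hw₁, hu₂, hw₂, hu₃, hw₃, hD₁, hD₂, hD₃] at h1 h2 h3 h4 h5
    simp only [hr₁, hr₂, hr₃, hs₁, hs₂, hs₃]
    field_simp at h1 h2 h3 h4 h5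
    refine ⟨?_, ?_, ?_⟩ <;> field_simp
    · linear_combination h5
    · have t2 : (κ₂ n₁ n₃)*(u₂0 n₁ n₃)*(w₂0 n₁ n₃)*(τ₁ n₁ n₂ n₃)*(τ₂ (n₁+1) n₂ (n₃+1))*(τ₃ n₁ n₂ n₃) = (κ₁ n₂ n₃)*(u₁0 n₂ n₃)*(w₂0 n₁ n₃)*(τ₁ n₁ n₂ (n₃+1))*(τ₂ (n₁+1) n₂ n₃)*(τ₃ n₁ n₂ n₃) + (κ₃ n₁ n₂)*(u₂0 n₁ n₃)*(w₃0 n₁ n₂)*(τ₁ n₁ n₂ n₃)*(τ₂ n₁ n₂ (n₃+1))*(τ₃ (n₁+1) n₂ n₃) + (κ₁ n₂ n₃)*(κ₃ n₁ n₂)*(u₁0 n₂ n₃)*(w₃0 n₁ n₂)*(τ₁ n₁ n₂ (n₃+1))*(τ₂ n₁ n₂ n₃)*(τ₃ (n₁+1) n₂ n₃) :=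
        by linear_combination -h1
      linear_combination t2
    · linear_combination h2
  · rintro ⟨t1, t2, t3⟩
    simp only [hr₁, hr₂, hr₃, hs₁, hs₂, hs₃] at t1 t2 t3
    field_simp at t1 t2 t3
    have t2' : (κ₂ n₁ n₃)*(u₂0 n₁ n₃)*(w₂0 n₁ n₃)*(τ₂ (n₁+1) n₂ (n₃+1))*(τ₃ n₁ n₂ n₃)*(τ₁ n₁ n₂ n₃) = (κ₁ n₂ n₃)*(u₁0 n₂ n₃)*(w₂0 n₁ n₃)*(τ₁ n₁ n₂ (n₃+1))*(τ₂ (n₁+1) n₂ n₃)*(τ₃ n₁ n₂ n₃) + (κ₃ n₁ n₂)*(u₂0 n₁ n₃)*(w₃0 n₁ n₂)*(τ₁ n₁ n₂ n₃)*(τ₂ n₁ n₂ (n₃+1))*(τ₃ (n₁+1) n₂ n₃) + (κ₁ n₂ n₃)*(κ₃ n₁ n₂)*(u₁0 n₂ n₃)*(w₃0 n₁ n₂)*(τ₁ n₁ n₂ (n₃+1))*(τ₂ n₁ n₂ n₃)*(τ₃ (n₁+1) n₂ n₃) :=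
      by linear_combination t2
    refine ⟨?_, ?_, ?_, ?_, ?_, ?_⟩
    · rw [eq_div_iff hD₁ne]
      simp only [hu₁, hw₁, hu₂, hw₂, hu₃, hw₃, hD₁]
      field_simp
      linear_combination (-1 : ℂ) * t2'
    · rw [eq_div_iff hw₃ne]
      simp only [hu₁, hw₁, hu₂, hw₂, hu₃, hw₃, hD₃]
      field_simp
      linear_combination t3
    · rw [eq_div_iff hD₂ne]
      simp only [hu₁, hw₁, hu₂, hw₂, hu₃, hw₃, hD₂]
      field_simp
      linear_combination (-1 : ℂ) * t1
    · rw [eq_div_iff hD₃ne]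
      simp only [hu₁, hw₁, hu₂, hw₂, hu₃, hw₃, hD₃]
      field_simp
      linear_combination (-1 : ℂ) * t3
    · rw [eq_div_iff hu₁ne]
      simp only [hu₁, hw₁, hu₂, hw₂, hu₃, hw₃, hD₂]
      field_simp
      linear_combination t1
    · rw [eq_div_iff hD₁ne]
      simp only [hu₁, hw₁, hu₂, hw₂, hu₃, hw₃, hD₁]
      field_simp
      linear_combination (-1 : ℂ) * t2'
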